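/- Let p > 3 and c be distinct primes and let q be a prime satisfying condition (1). Then in the quaternion algebra ℍ[ℚ, −p, −q] there exists an element α such that α² = −c·p (as a scalar), α·j = −(j·α), and the ℚ-linear span of {1, α, j, α·j} is the whole algebra. -/

import Mathlib

open Quaternion


lemma prime_not_sq {c : ℕ} (hc : c.Prime) (s : ℕ) : s ^ 2 ≠ c := by
  intro h
  rcases (Nat.Prime.eq_one_or_self_of_dvd hc s ⟨s, by rw [← h]; ring⟩) with h1 | h1
  · subst h1; simp at h; exact hc.one_lt.ne' (by omega)
  · subst h1; nlinarith [hc.one_lt]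

lemma key_rep (q c : ℕ) (hq : q.Prime) (hc : c.Prime) (hqc : q ≠ c)
    (α β : ℤ) (hα : (q:ℤ) ∣ α^2 - c) (hβ : (c:ℤ) ∣ β^2 + q) :
    ∃ x z : ℚ, x^2 + q * z^2 = c := by
  haveI : Fact q.Prime := ⟨hq⟩
  haveI : Fact c.Prime := ⟨hc⟩
  set a := Nat.sqrt (q*c) with ha
  set b := Nat.sqrt c with hb
  set d := Nat.sqrt q with hd
  have hcard : (Finset.univ : Finset (ZMod q × ZMod c)).card <
      ((Finset.range (a+1)) ×ˢ (Finset.range (b+1)) ×ˢ (Finset.range (d+1))).card := by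
    rw [Finset.card_product, Finset.card_product, Finset.card_univ]
    simp only [Finset.card_range, Fintype.card_prod, ZMod.card]
    have h1 : q * c < (a+1)^2 := Nat.lt_succ_sqrt' (q*c)
    have h2 : c < (b+1)^2 := Nat.lt_succ_sqrt' c
    have h3 : q < (d+1)^2 := Nat.lt_succ_sqrt' q
    have : (q*c)^2 < ((a+1) * ((b+1) * (d+1)))^2 := by
      calc (q*c)^2 = (q*c) * (c * q) := by ring
        _ < (a+1)^2 * ((b+1)^2 * (d+1)^2) := by
            apply Nat.mul_lt_mul_of_lt_of_le h1
            · exact Nat.mul_le_mul h2.le h3.le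
            · positivity
        _ = ((a+1) * ((b+1) * (d+1)))^2 := by ring
    exact lt_of_pow_lt_pow_left₀ 2 (by positivity) this
  obtain ⟨t₁, ht₁, t₂, ht₂, hne, hfeq⟩ :=
    Finset.exists_ne_map_eq_of_card_lt_of_maps_to (t := (Finset.univ : Finset (ZMod q × ZMod c)))
      hcard
      (f := fun t : ℕ × ℕ × ℕ =>
        (((((t.1 : ℤ) - α * t.2.2 : ℤ)) : ZMod q), ((((t.1 : ℤ) - β * t.2.1 : ℤ)) : ZMod c)))
      (fun x _ => Finset.mem_univ _)
  obtain ⟨u, hu⟩ : ∃ u : ℤ, u = (t₁.1 : ℤ) - t₂.1 := ⟨_, rfl⟩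
  obtain ⟨v, hv⟩ : ∃ v : ℤ, v = (t₁.2.1 : ℤ) - t₂.2.1 := ⟨_, rfl⟩
  obtain ⟨w, hw⟩ : ∃ w : ℤ, w = (t₁.2.2 : ℤ) - t₂.2.2 := ⟨_, rfl⟩
  have hne' : u ≠ 0 ∨ v ≠ 0 ∨ w ≠ 0 := by
    by_contra hcon
    push_neg at hcon
    obtain ⟨e1, e2, e3⟩ := hcon
    apply hne
    rw [hu] at e1; rw [hv] at e2; rw [hw] at e3
    have f1 : t₁.1 = t₂.1 := by omega
    have f2 : t₁.2.1 = t₂.2.1 := by omega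
    have f3 : t₁.2.2 = t₂.2.2 := by omega
    exact Prod.ext f1 (Prod.ext f2 f3)
  have hq1 : (q:ℤ) ∣ u - α * w := by
    have h1 := congrArg Prod.fst hfeq
    simp only at h1
    rw [← sub_eq_zero] at h1
    rw [← ZMod.intCast_zmod_eq_zero_iff_dvd, hu, hw]
    push_cast at h1 ⊢
    linear_combination h1
  have hc1 : (c:ℤ) ∣ u - β * v := by
    have h1 := congrArg Prod.snd hfeq
    simp only at h1
    rw [← sub_eq_zero] at h1
    rw [← ZMod.intCast_zmod_eq_zero_iff_dvd, hu, hv]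
    push_cast at h1 ⊢
    linear_combination h1
  clear hfeq hcard hne
  have hqm : (q:ℤ) ∣ u^2 + q * v^2 - c * w^2 := by
    have e : u^2 + (q:ℤ) * v^2 - c * w^2 = (u - α*w) * (u + α*w) + (α^2 - c) * w^2 + q * v^2 := by ring
    rw [e]
    exact dvd_add (dvd_add (Dvd.dvd.mul_right hq1 _) (Dvd.dvd.mul_right hα _)) ⟨v^2, rfl⟩
  have hcm : (c:ℤ) ∣ u^2 + q * v^2 - c * w^2 := by
    have e : u^2 + (q:ℤ) * v^2 - c * w^2 = (u - β*v) * (u + β*v) + (β^2 + q) * v^2 - c * w^2 := by ring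
    rw [e]
    exact dvd_sub (dvd_add (Dvd.dvd.mul_right hc1 _) (Dvd.dvd.mul_right hβ _)) ⟨w^2, rfl⟩
  have hqc' : IsCoprime (q:ℤ) (c:ℤ) := by
    rw [Int.isCoprime_iff_gcd_eq_one]
    exact_mod_cast (Nat.coprime_primes hq hc).mpr hqc
  have hdvd : (q:ℤ) * c ∣ u^2 + q * v^2 - c * w^2 := hqc'.mul_dvd hqm hcm
  simp only [Finset.mem_product, Finset.mem_range] at ht₁ ht₂
  obtain ⟨h11, h12, h13⟩ := ht₁
  obtain ⟨h21, h22, h23⟩ := ht₂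
  have hab : (a:ℤ)^2 ≤ (q:ℤ)*c := by exact_mod_cast Nat.sqrt_le' (q*c)
  have hbb : (b:ℤ)^2 ≤ (c:ℤ) - 1 := by
    have h1 : b^2 ≤ c := Nat.sqrt_le' c
    have h2 : b^2 ≠ c := prime_not_sq hc b
    have h3 : b^2 + 1 ≤ c := by omega
    have h4 := Int.ofNat_le.mpr h3
    push_cast at h4
    linarith
  have hdb : (d:ℤ)^2 ≤ (q:ℤ) - 1 := by
    have h1 : d^2 ≤ q := Nat.sqrt_le' q
    have h2 : d^2 ≠ q := prime_not_sq hq d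
    have h3 : d^2 + 1 ≤ q := by omega
    have h4 := Int.ofNat_le.mpr h3
    push_cast at h4
    linarith
  have hub : u^2 ≤ (q:ℤ)*c := by
    have l1 : (t₁.1:ℤ) ≤ a := by exact_mod_cast Nat.lt_succ_iff.mp h11
    have l2 : (t₂.1:ℤ) ≤ a := by exact_mod_cast Nat.lt_succ_iff.mp h21
    have l3 : (0:ℤ) ≤ t₁.1 := Int.natCast_nonneg _
    have l4 : (0:ℤ) ≤ t₂.1 := Int.natCast_nonneg _
    have l5 : u^2 ≤ (a:ℤ)^2 := sq_le_sq' (by rw [hu]; linarith) (by rw [hu]; linarith)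
    linarith
  have hvb : v^2 ≤ (c:ℤ) - 1 := by
    have l1 : (t₁.2.1:ℤ) ≤ b := by exact_mod_cast Nat.lt_succ_iff.mp h12
    have l2 : (t₂.2.1:ℤ) ≤ b := by exact_mod_cast Nat.lt_succ_iff.mp h22
    have l3 : (0:ℤ) ≤ t₁.2.1 := Int.natCast_nonneg _
    have l4 : (0:ℤ) ≤ t₂.2.1 := Int.natCast_nonneg _
    have l5 : v^2 ≤ (b:ℤ)^2 := sq_le_sq' (by rw [hv]; linarith) (by rw [hv]; linarith)
    linarith
  have hwb : w^2 ≤ (q:ℤ) - 1 := by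
    have l1 : (t₁.2.2:ℤ) ≤ d := by exact_mod_cast Nat.lt_succ_iff.mp h13
    have l2 : (t₂.2.2:ℤ) ≤ d := by exact_mod_cast Nat.lt_succ_iff.mp h23
    have l3 : (0:ℤ) ≤ t₁.2.2 := Int.natCast_nonneg _
    have l4 : (0:ℤ) ≤ t₂.2.2 := Int.natCast_nonneg _
    have l5 : w^2 ≤ (d:ℤ)^2 := sq_le_sq' (by rw [hw]; linarith) (by rw [hw]; linarith)
    linarith
  clear h11 h12 h13 h21 h22 h23 hu hv hw hq1 hc1 hα hβ
  have hq2 : (2:ℤ) ≤ q := by exact_mod_cast hq.two_le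
  have hc2 : (2:ℤ) ≤ c := by exact_mod_cast hc.two_le
  obtain ⟨k, hk⟩ := hdvd
  have hpos : (0:ℤ) < (q:ℤ)*c := by positivity
  have hk01 : k = 0 ∨ k = 1 := by
    have b1 : (q:ℤ)*c * k < (q:ℤ)*c * 2 := by
      rw [← hk]
      have e1 : (q:ℤ) * v^2 ≤ (q:ℤ) * ((c:ℤ)-1) := mul_le_mul_of_nonneg_left hvb (by linarith)
      have e2 : (0:ℤ) ≤ (c:ℤ) * w^2 := by positivity
      linarith
    have b2 : (q:ℤ)*c * (-1) < (q:ℤ)*c * k := by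
      rw [← hk]
      have e1 : (c:ℤ) * w^2 ≤ (c:ℤ) * ((q:ℤ)-1) := mul_le_mul_of_nonneg_left hwb (by linarith)
      have e2 : (0:ℤ) ≤ (q:ℤ) * v^2 := by positivity
      have e3 : (0:ℤ) ≤ u^2 := sq_nonneg u
      linarith
    have := (mul_lt_mul_iff_right₀ hpos).mp b1
    have := (mul_lt_mul_iff_right₀ hpos).mp b2
    omega
  have hwQ : ((q:ℚ)) > 0 := by exact_mod_cast hq.pos
  rcases hk01 with hk0 | hk1
  · -- m = 0
    rw [hk0, mul_zero] at hk
    have hm0 : u^2 + (q:ℤ)*v^2 = c*w^2 := by linarith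
    have hwne : w ≠ 0 := by
      intro h0
      rw [h0] at hm0
      have e0 : u^2 + (q:ℤ)*v^2 = 0 := by linarith [hm0]
      have e1 : (0:ℤ) ≤ u^2 := sq_nonneg u
      have e2 : (0:ℤ) ≤ v^2 := sq_nonneg v
      have e2' : (0:ℤ) ≤ (q:ℤ)*v^2 := by positivity
      have hu0 : u = 0 := by
        have : u^2 = 0 := by linarith
        exact pow_eq_zero_iff (n := 2) (by norm_num) |>.mp this
      have hv0 : v = 0 := by
        have e4 : v^2 = 0 := by nlinarith
        exact pow_eq_zero_iff (n := 2) (by norm_num) |>.mp e4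
      rcases hne' with h | h | h <;> tauto
    have hwQne : ((w:ℚ)) ≠ 0 := Int.cast_ne_zero.mpr hwne
    refine ⟨(u:ℚ)/w, (v:ℚ)/w, ?_⟩
    have hcast : (u:ℚ)^2 + (q:ℚ)*(v:ℚ)^2 = (c:ℚ)*(w:ℚ)^2 := by exact_mod_cast hm0
    field_simp
    linear_combination hcast
  · -- m = q*c
    rw [hk1, mul_one] at hk
    have hm1 : u^2 + (q:ℤ)*v^2 = (q:ℤ)*c + c*w^2 := by linarith
    have hcast : (u:ℚ)^2 + (q:ℚ)*(v:ℚ)^2 = (q:ℚ)*(c:ℚ) + (c:ℚ)*(w:ℚ)^2 := by exact_mod_cast hm1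
    have hDne : (q:ℚ) + (w:ℚ)^2 ≠ 0 := by positivity
    refine ⟨((u:ℚ)*(w:ℚ) + (q:ℚ)*(v:ℚ))/((q:ℚ) + (w:ℚ)^2), ((u:ℚ) - (v:ℚ)*(w:ℚ))/((q:ℚ) + (w:ℚ)^2), ?_⟩
    field_simp
    linear_combination ((w:ℚ)^2 + (q:ℚ)) * hcast


lemma sq_lift {n : ℕ} (hn : n.Prime) {a : ℤ} (h : IsSquare ((a : ZMod n))) :
    ∃ r : ℤ, (n:ℤ) ∣ r^2 - a := by
  haveI : Fact n.Prime := ⟨hn⟩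
  obtain ⟨r, hr⟩ := h
  refine ⟨(r.val : ℤ), ?_⟩
  rw [← ZMod.intCast_zmod_eq_zero_iff_dvd]
  push_cast [ZMod.natCast_val, ZMod.cast_id]
  rw [hr]
  ring

lemma alpha_exists (q c : ℕ) (hq : q.Prime) (hc : c.Prime) (hq2 : q ≠ 2)
    (h1 : @legendreSym q ⟨hq⟩ (c : ℤ) = 1 ∨ (c = 2 ∧ q % 8 = 7)) :
    ∃ α : ℤ, (q:ℤ) ∣ α^2 - c := by
  haveI : Fact q.Prime := ⟨hq⟩
  apply sq_lift hq
  rcases h1 with h1 | ⟨hc2, hq8⟩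
  · have hne : ((c:ℤ) : ZMod q) ≠ 0 := by
      intro h0
      rw [← legendreSym.eq_zero_iff q] at h0
      omega
    exact (legendreSym.eq_one_iff q hne).mp h1
  · subst hc2
    have := (ZMod.exists_sq_eq_two_iff (p := q) hq2).mpr (Or.inr hq8)
    simpa using this

lemma beta_exists (q c : ℕ) (hq : q.Prime) (hc : c.Prime) (hqc : q ≠ c)
    (h1 : (Odd c ∧ q % 8 = 3 ∧ @legendreSym q ⟨hq⟩ (c : ℤ) = 1) ∨ c = 2) :
    ∃ β : ℤ, (c:ℤ) ∣ β^2 + q := by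
  haveI : Fact q.Prime := ⟨hq⟩
  haveI : Fact c.Prime := ⟨hc⟩
  rcases h1 with ⟨hcodd, hq8, hl⟩ | hc2
  · -- c odd
    have hcoddn : c % 2 = 1 := Nat.odd_iff.mp hcodd
    have hc2 : c ≠ 2 := by omega
    have hq2 : q ≠ 2 := by omega
    have hrec := legendreSym.quadratic_reciprocity' (p := q) (q := c) hq2 hc2
    have hqhalf : Odd (q / 2) := by rw [Nat.odd_iff]; omega
    have hpow : ((-1:ℤ))^(q/2*(c/2)) = (-1)^(c/2) := by
      rw [pow_mul, Odd.neg_one_pow hqhalf]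
    have hcq : legendreSym c (q:ℤ) = (-1)^(c/2) := by rw [hrec, hl, mul_one, hpow]
    have hneg1 : legendreSym c (-1) = ZMod.χ₄ c := legendreSym.at_neg_one hc2
    have hfinal : legendreSym c (-(q:ℤ)) = 1 := by
      have e : (-(q:ℤ)) = (-1) * q := by ring
      rw [e, legendreSym.mul, hneg1, hcq, ZMod.χ₄_nat_eq_if_mod_four]
      rcases (by omega : c % 4 = 1 ∨ c % 4 = 3) with h | h
      · rw [if_neg (by omega), if_pos h]
        have he : Even (c/2) := by rw [Nat.even_iff]; omega
        rw [Even.neg_one_pow he]; ring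
      · rw [if_neg (by omega), if_neg (by omega)]
        have ho : Odd (c/2) := by rw [Nat.odd_iff]; omega
        rw [Odd.neg_one_pow ho]; ring
    have hne : (((-(q:ℤ)) : ℤ) : ZMod c) ≠ 0 := by
      intro h0
      have := (legendreSym.eq_zero_iff c (-(q:ℤ))).mpr h0
      omega
    obtain ⟨r, hr⟩ := sq_lift hc ((legendreSym.eq_one_iff c hne).mp hfinal)
    exact ⟨r, by simpa [sub_neg_eq_add] using hr⟩
  · subst hc2
    refine ⟨1, ?_⟩
    have : Odd q := hq.odd_of_ne_two (by rintro rfl; exact hqc rfl)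
    obtain ⟨k, hk⟩ := this
    refine ⟨(k+1 : ℕ), by push_cast [hk]; ring⟩


lemma quat_part (p c q : ℕ) (hp : 0 < p) (hc : 0 < c) (X Z : ℚ)
    (hXZ : X^2 + q * Z^2 = c) :
    ∃ α : ℍ[ℚ, -(p : ℚ), -(q : ℚ)],
      α ^ 2 = ((-((c : ℚ) * (p : ℚ)) : ℚ) : ℍ[ℚ, -(p : ℚ), -(q : ℚ)]) ∧
      α * (⟨0, 0, 1, 0⟩ : ℍ[ℚ, -(p : ℚ), -(q : ℚ)]) =
        -((⟨0, 0, 1, 0⟩ : ℍ[ℚ, -(p : ℚ), -(q : ℚ)]) * α) ∧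
      Submodule.span ℚ
        ({1, α, ⟨0, 0, 1, 0⟩, α * ⟨0, 0, 1, 0⟩} : Set ℍ[ℚ, -(p : ℚ), -(q : ℚ)]) = ⊤ := by
  have hcQ : (c:ℚ) ≠ 0 := by positivity
  refine ⟨⟨0, X, 0, Z⟩, ?_, ?_, ?_⟩
  · rw [sq]
    apply QuaternionAlgebra.ext <;>
      simp [QuaternionAlgebra.re_mul, QuaternionAlgebra.imI_mul, QuaternionAlgebra.imJ_mul,
        QuaternionAlgebra.imK_mul]
    · linear_combination (-(p:ℚ)) * hXZ
    · ring
  · apply QuaternionAlgebra.ext <;>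
      simp [QuaternionAlgebra.re_mul, QuaternionAlgebra.imI_mul, QuaternionAlgebra.imJ_mul,
        QuaternionAlgebra.imK_mul]
  · rw [eq_top_iff]
    rintro w -
    have hw : w = w.re • (1 : ℍ[ℚ, -(p : ℚ), -(q : ℚ)])
        + ((X * w.imI + q * Z * w.imK)/c) • (⟨0, X, 0, Z⟩ : ℍ[ℚ, -(p : ℚ), -(q : ℚ)])
        + w.imJ • (⟨0, 0, 1, 0⟩ : ℍ[ℚ, -(p : ℚ), -(q : ℚ)])
        + ((X * w.imK - Z * w.imI)/c) • ((⟨0, X, 0, Z⟩ : ℍ[ℚ, -(p : ℚ), -(q : ℚ)]) * ⟨0, 0, 1, 0⟩) := by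
      apply QuaternionAlgebra.ext <;>
        simp [QuaternionAlgebra.re_mul, QuaternionAlgebra.imI_mul, QuaternionAlgebra.imJ_mul,
          QuaternionAlgebra.imK_mul, QuaternionAlgebra.re_smul, QuaternionAlgebra.imI_smul,
          QuaternionAlgebra.imJ_smul, QuaternionAlgebra.imK_smul] <;> field_simp <;> ring_nf
      · linear_combination (-w.imI) * hXZ
      · linear_combination (-w.imK) * hXZ
    rw [hw]
    apply Submodule.add_mem
    apply Submodule.add_mem
    apply Submodule.add_mem
    · exact Submodule.smul_mem _ _ (Submodule.subset_span (by simp))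
    · exact Submodule.smul_mem _ _ (Submodule.subset_span (by simp))
    · exact Submodule.smul_mem _ _ (Submodule.subset_span (by simp))
    · exact Submodule.smul_mem _ _ (Submodule.subset_span (by simp))


/-- Condition (1) on the prime `q`: either `c` is odd, `q ≡ 3 (mod 8)`, `(p/q) = −1` and
`(c/q) = 1`; or `c = 2`, `q ≡ 7 (mod 8)` and `(p/q) = −1`. -/
def SatisfiesCond1 (p c q : ℕ) (hq : q.Prime) : Prop :=
  (Odd c ∧ q % 8 = 3 ∧ @legendreSym q ⟨hq⟩ (p : ℤ) = -1 ∧ @legendreSym q ⟨hq⟩ (c : ℤ) = 1) ∨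
  (c = 2 ∧ q % 8 = 7 ∧ @legendreSym q ⟨hq⟩ (p : ℤ) = -1)

/-- In the quaternion algebra `ℍ[ℚ, −p, −q]` there exists an element `α` with
`α² = −c·p`, anticommuting with `j`, such that `1, α, j, α·j` span the whole algebra. -/
theorem exists_sqrt_neg_cp (p c q : ℕ) (hp : p.Prime) (hp3 : 3 < p) (hc : c.Prime)
    (hpc : p ≠ c) (hq : q.Prime) (hcond : SatisfiesCond1 p c q hq) :
    ∃ α : ℍ[ℚ, -(p : ℚ), -(q : ℚ)],
      α ^ 2 = ((-((c : ℚ) * (p : ℚ)) : ℚ) : ℍ[ℚ, -(p : ℚ), -(q : ℚ)]) ∧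
      α * (⟨0, 0, 1, 0⟩ : ℍ[ℚ, -(p : ℚ), -(q : ℚ)]) =
        -((⟨0, 0, 1, 0⟩ : ℍ[ℚ, -(p : ℚ), -(q : ℚ)]) * α) ∧
      Submodule.span ℚ
        ({1, α, ⟨0, 0, 1, 0⟩, α * ⟨0, 0, 1, 0⟩} : Set ℍ[ℚ, -(p : ℚ), -(q : ℚ)]) = ⊤ := by
  haveI : Fact q.Prime := ⟨hq⟩
  have hq2 : q ≠ 2 := by
    rcases hcond with ⟨-, hq8, -, -⟩ | ⟨-, hq8, -⟩ <;> omega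
  have hqc : q ≠ c := by
    rcases hcond with ⟨-, -, -, hl⟩ | ⟨hc2, hq8, -⟩
    · intro h
      have h0 : ((c:ℤ) : ZMod q) = 0 := by
        rw [ZMod.intCast_zmod_eq_zero_iff_dvd]
        exact Int.natCast_dvd_natCast.mpr (h ▸ dvd_refl q)
      have := (legendreSym.eq_zero_iff q (c:ℤ)).mpr h0
      omega
    · omega
  obtain ⟨αi, hαi⟩ := alpha_exists q c hq hc hq2 (by
    rcases hcond with ⟨-, -, -, hl⟩ | ⟨hc2, hq8, -⟩
    · exact Or.inl hl
    · exact Or.inr ⟨hc2, hq8⟩)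
  obtain ⟨βi, hβi⟩ := beta_exists q c hq hc hqc (by
    rcases hcond with ⟨hcodd, hq8, -, hl⟩ | ⟨hc2, -, -⟩
    · exact Or.inl ⟨hcodd, hq8, hl⟩
    · exact Or.inr hc2)
  obtain ⟨X, Z, hXZ⟩ := key_rep q c hq hc hqc αi βi hαi hβi
  exact quat_part p c q hp.pos hc.pos X Z hXZ
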